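/- arXiv:math/0002168 — 6 statements merged into one kernel-verified Lean document; each statement's English description precedes it below -/
import Mathlib

section
/- Let Γ be a finite-index subgroup of PSL(2,ℤ) that contains no element of order 2, and let Γ' = π⁻¹(Γ) be its preimage in SL(2,ℤ). Then the surjection Γ' → Γ induced by π splits: there exists a group homomorphism s : Γ → Γ' such that π(s(γ)) = γ for all γ ∈ Γ. -/
open Matrix MatrixGroups

/-- `SL(2,ℤ)`: 2×2 integer matrices of determinant 1. -/
abbrev SL2Z : Type := Matrix.SpecialLinearGroup (Fin 2) ℤ

/-- `PSL(2,ℤ) = SL(2,ℤ)/{±I}`, realized as the quotient by the center. -/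
abbrev PSL2Z : Type := SL2Z ⧸ Subgroup.center SL2Z

/-- The quotient homomorphism `π : SL(2,ℤ) → PSL(2,ℤ)`. -/
def proj : SL2Z →* PSL2Z := QuotientGroup.mk' (Subgroup.center SL2Z)

namespace SplitHelper

local notation "SS" => (ModularGroup.S : SL2Z)
local notation "TT" => (ModularGroup.T : SL2Z)

/-! ### Elementary matrix facts -/

lemma T_zpow_mul (k : ℤ) (A : SL2Z) : ((TT^k * A : SL2Z) : Matrix (Fin 2) (Fin 2) ℤ) =
    !![A 0 0 + k * A 1 0, A 0 1 + k * A 1 1; A 1 0, A 1 1] := by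
  rw [Matrix.SpecialLinearGroup.coe_mul, ModularGroup.coe_T_zpow,
    Matrix.eta_fin_two (A : Matrix (Fin 2) (Fin 2) ℤ), Matrix.mul_fin_two]
  ext i j; fin_cases i <;> fin_cases j <;> simp [mul_comm]

lemma S_mul (A : SL2Z) : ((SS * A : SL2Z) : Matrix (Fin 2) (Fin 2) ℤ) =
    !![-(A 1 0), -(A 1 1); A 0 0, A 0 1] := by
  rw [Matrix.SpecialLinearGroup.coe_mul, ModularGroup.coe_S,
    Matrix.eta_fin_two (A : Matrix (Fin 2) (Fin 2) ℤ), Matrix.mul_fin_two]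
  ext i j; fin_cases i <;> fin_cases j <;> simp

lemma S_sq : SS^2 = -1 := by
  ext i j; fin_cases i <;> fin_cases j <;>
    simp [pow_two, Matrix.SpecialLinearGroup.coe_mul, ModularGroup.coe_S, Matrix.mul_apply,
      Fin.sum_univ_two]

lemma ST_cube : (SS * TT)^3 = -1 := by
  ext i j; fin_cases i <;> fin_cases j <;>
    simp [pow_succ, pow_zero, Matrix.SpecialLinearGroup.coe_mul, ModularGroup.coe_S, ModularGroup.coe_T,
      Matrix.mul_apply, Fin.sum_univ_two]

lemma det_entries (A : SL2Z) : A 0 0 * A 1 1 - A 0 1 * A 1 0 = 1 := by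
  have := A.prop; rw [Matrix.det_fin_two] at this; exact this

lemma mul_entry (A B : SL2Z) (i j : Fin 2) :
    (A * B) i j = A i 0 * B 0 j + A i 1 * B 1 j := by
  rw [Matrix.SpecialLinearGroup.coe_mul, Matrix.mul_apply, Fin.sum_univ_two]

/-! ### Generation of `SL(2,ℤ)` by `S` and `T` -/

theorem closure_S_T : Subgroup.closure ({SS, TT} : Set SL2Z) = ⊤ := by
  set cl := Subgroup.closure ({SS, TT} : Set SL2Z) with hcl
  have hS : SS ∈ cl := Subgroup.subset_closure (by simp)
  have hT : TT ∈ cl := Subgroup.subset_closure (by simp)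
  rw [eq_top_iff]
  rintro A -
  generalize h : (A 1 0).natAbs = n
  induction n using Nat.strong_induction_on generalizing A with
  | _ n ih =>
  rcases eq_or_ne (A 1 0) 0 with h0 | h0
  · have hdet := det_entries A
    rw [h0, mul_zero, sub_zero] at hdet
    rcases Int.isUnit_iff.mp (IsUnit.of_mul_eq_one _ hdet) with ha | ha
    · have hd : A 1 1 = 1 := by rw [ha, one_mul] at hdet; exact hdet
      have : A = TT^(A 0 1) := by
        ext i j
        rw [ModularGroup.coe_T_zpow]
        fin_cases i <;> fin_cases j <;> simp [ha, hd, h0]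
      rw [this]; exact Subgroup.zpow_mem _ hT _
    · have hd : A 1 1 = -1 := by rw [ha] at hdet; omega
      have : A = SS^2 * TT^(-(A 0 1)) := by
        ext i j
        rw [Matrix.SpecialLinearGroup.coe_mul, S_sq]
        rw [show ((-1 : SL2Z) : Matrix (Fin 2) (Fin 2) ℤ) * (TT^(-(A 0 1)) : SL2Z) =
          -(TT^(-(A 0 1)) : SL2Z) by simp]
        rw [ModularGroup.coe_T_zpow]
        fin_cases i <;> fin_cases j <;> simp [ha, hd, h0]
      rw [this]
      exact Subgroup.mul_mem _ (Subgroup.pow_mem _ hS _) (Subgroup.zpow_mem _ hT _)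
  · set k : ℤ := -(A 0 0 / A 1 0) with hk
    set B : SL2Z := SS * (TT^k * A) with hB
    have hB10 : B 1 0 = A 0 0 % A 1 0 := by
      have h1 : (B : Matrix (Fin 2) (Fin 2) ℤ) 1 0 = (TT^k * A) 0 0 := by
        rw [hB, S_mul]; simp
      rw [show ((TT^k * A : SL2Z)) 0 0 = A 0 0 + k * A 1 0 by rw [T_zpow_mul]; simp] at h1
      rw [h1, hk, Int.emod_def]; ring
    have hlt : (B 1 0).natAbs < n := by
      rw [hB10, ← h]
      have h1 : 0 ≤ A 0 0 % A 1 0 := Int.emod_nonneg _ h0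
      have h2 : A 0 0 % A 1 0 < |A 1 0| := Int.emod_lt_abs _ h0
      rw [Int.abs_eq_natAbs] at h2
      omega
    have hBmem : B ∈ cl := ih _ hlt rfl
    have : A = TT^(-k) * (SS⁻¹ * B) := by rw [hB]; group
    rw [this]
    exact Subgroup.mul_mem _ (Subgroup.zpow_mem _ hT _)
      (Subgroup.mul_mem _ (Subgroup.inv_mem _ hS) hBmem)

/-! ### The center and `proj` -/

lemma mem_center_iff' {A : SL2Z} : A ∈ Subgroup.center SL2Z ↔ A = 1 ∨ A = -1 := by
  rw [Matrix.SpecialLinearGroup.mem_center_iff]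
  constructor
  · rintro ⟨r, hr, hA⟩
    rcases Int.isUnit_iff.mp (IsUnit.of_mul_eq_one (a := r) r (by
      simpa [Fintype.card_fin, pow_two] using hr)) with h | h
    · left; apply Subtype.ext; rw [← hA, h]; simp
    · right; apply Subtype.ext; rw [← hA, h]
      simp [Matrix.SpecialLinearGroup.coe_neg]
  · rintro (rfl | rfl)
    · exact ⟨1, by norm_num, by simp⟩
    · refine ⟨-1, by norm_num, ?_⟩
      ext i j
      fin_cases i <;> fin_cases j <;>
        simp [Matrix.SpecialLinearGroup.coe_neg, Matrix.scalar_apply, Matrix.diagonal_apply]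

lemma proj_eq_one_iff {A : SL2Z} : proj A = 1 ↔ A = 1 ∨ A = -1 := by
  rw [← mem_center_iff']
  rw [show proj A = 1 ↔ A ∈ MonoidHom.ker proj from Iff.rfl]
  rw [proj, QuotientGroup.ker_mk']

lemma proj_neg_one : proj (-1 : SL2Z) = 1 := proj_eq_one_iff.mpr (Or.inr rfl)

lemma proj_surjective : Function.Surjective proj := QuotientGroup.mk'_surjective _

lemma neg_one_mul' (A : SL2Z) : -A = (-1 : SL2Z) * A := by
  ext i j
  simp [Matrix.SpecialLinearGroup.coe_neg, Matrix.SpecialLinearGroup.coe_mul]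

lemma neg_one_central (g : SL2Z) : g * (-1 : SL2Z) = (-1 : SL2Z) * g :=
  (Subgroup.mem_center_iff.mp (mem_center_iff'.mpr (Or.inr rfl)) g)

lemma neg_one_mul_neg_one : (-1 : SL2Z) * (-1 : SL2Z) = 1 := by
  ext i j
  fin_cases i <;> fin_cases j <;>
    simp [Matrix.SpecialLinearGroup.coe_mul, Matrix.SpecialLinearGroup.coe_neg, Matrix.mul_apply,
      Fin.sum_univ_two]

end SplitHelper

namespace SplitHelper

/-! ### The action on irrationals -/

/-- The irrationals. -/
def XIrr : Type := {x : ℝ // Irrational x}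

namespace XIrr

noncomputable def smulAux (A : SL2Z) (x : ℝ) : ℝ :=
  ((A 0 0 : ℝ) * x + (A 0 1 : ℝ)) / ((A 1 0 : ℝ) * x + (A 1 1 : ℝ))

lemma denom_ne_zero (A : SL2Z) {x : ℝ} (hx : Irrational x) :
    (A 1 0 : ℝ) * x + (A 1 1 : ℝ) ≠ 0 := by
  rcases eq_or_ne (A 1 0) 0 with h | h
  · have hd := det_entries A
    rw [h, mul_zero, sub_zero] at hd
    have : A 1 1 ≠ 0 := by rintro h1; rw [h1, mul_zero] at hd; exact one_ne_zero hd.symm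
    simp [h, this]
  · intro hc
    have : x = ((-(A 1 1) : ℤ) : ℝ) / ((A 1 0 : ℤ) : ℝ) := by
      push_cast
      field_simp at hc ⊢
      linarith
    rw [this] at hx
    exact (Rat.not_irrational _) (by rw [show ((-(A 1 1) : ℤ) : ℝ) / ((A 1 0 : ℤ) : ℝ)
      = ((((-(A 1 1) : ℤ) : ℚ) / ((A 1 0 : ℤ) : ℚ) : ℚ) : ℝ) by push_cast; ring] at hx; exact hx)

lemma smulAux_irrational (A : SL2Z) {x : ℝ} (hx : Irrational x) :
    Irrational (smulAux A x) := by
  rintro ⟨q, hq⟩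
  have hden := denom_ne_zero A hx
  rw [smulAux] at hq
  have h1 : (q : ℝ) * ((A 1 0 : ℝ) * x + (A 1 1 : ℝ)) = (A 0 0 : ℝ) * x + (A 0 1 : ℝ) := by
    rw [hq, div_mul_cancel₀ _ hden]
  have hdet := det_entries A
  have e : ((A 0 0 : ℝ) - q * (A 1 0 : ℝ)) * x = q * (A 1 1 : ℝ) - (A 0 1 : ℝ) := by
    linear_combination -h1
  rcases eq_or_ne ((A 0 0 : ℝ) - q * (A 1 0 : ℝ)) 0 with h2 | h2
  · have h3 : (q : ℝ) * (A 1 1 : ℝ) - (A 0 1 : ℝ) = 0 := by rw [h2, zero_mul] at e; linarith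
    have hz : ((A 0 0 * A 1 1 - A 0 1 * A 1 0 : ℤ) : ℝ) = 0 := by
      push_cast
      linear_combination (A 1 1 : ℝ) * h2 + (A 1 0 : ℝ) * h3
    rw [hdet] at hz; norm_num at hz
  · have : x = (((q * (A 1 1 : ℚ) - (A 0 1 : ℚ)) / ((A 0 0 : ℚ) - q * (A 1 0 : ℚ)) : ℚ) : ℝ) := by
      push_cast
      rw [eq_div_iff h2]
      linear_combination e
    exact hx ⟨_, this.symm⟩

noncomputable instance : SMul SL2Z XIrr :=
  ⟨fun A x => ⟨smulAux A x.val, smulAux_irrational A x.prop⟩⟩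

lemma smul_val (A : SL2Z) (x : XIrr) :
    (A • x).val = ((A 0 0 : ℝ) * x.val + (A 0 1 : ℝ)) / ((A 1 0 : ℝ) * x.val + (A 1 1 : ℝ)) := rfl

noncomputable instance mulAction : MulAction SL2Z XIrr where
  one_smul x := by
    apply Subtype.ext
    rw [smul_val]
    simp [Matrix.SpecialLinearGroup.coe_one]
  mul_smul A B x := by
    apply Subtype.ext
    rw [smul_val, smul_val, smul_val]
    have hB := denom_ne_zero B x.prop
    have hAB := denom_ne_zero (A * B) x.prop
    rw [mul_entry A B 1 0, mul_entry A B 1 1] at hAB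
    rw [mul_entry A B 0 0, mul_entry A B 0 1, mul_entry A B 1 0, mul_entry A B 1 1]
    have key : ∀ a b : ℝ,
        a * (((B 0 0 : ℝ) * x.val + (B 0 1 : ℝ)) / ((B 1 0 : ℝ) * x.val + (B 1 1 : ℝ))) + b
        = (a * ((B 0 0 : ℝ) * x.val + (B 0 1 : ℝ)) + b * ((B 1 0 : ℝ) * x.val + (B 1 1 : ℝ)))
          / ((B 1 0 : ℝ) * x.val + (B 1 1 : ℝ)) := by
      intro a b; rw [mul_div_assoc', div_add' _ _ _ hB]
    rw [key, key]
    rw [div_div_div_comm, div_self hB, div_one]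
    push_cast at hAB ⊢
    rw [div_eq_div_iff]
    · ring
    · exact hAB
    · have hA : ((A 1 0 : ℝ)) * (((B 0 0 : ℝ) * x.val + (B 0 1 : ℝ)) / ((B 1 0 : ℝ) * x.val + (B 1 1 : ℝ))) + (A 1 1 : ℝ) ≠ 0 := by
        have := denom_ne_zero A (smulAux_irrational B x.prop)
        rw [smulAux] at this; exact this
      rw [key] at hA
      intro hzero
      apply hA
      rw [hzero, zero_div]

end XIrr

/-- SL action as permutations. -/
noncomputable def permSL : SL2Z →* Equiv.Perm XIrr := MulAction.toPermHom SL2Z XIrr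

lemma neg_one_smul_XIrr (x : XIrr) : (-1 : SL2Z) • x = x := by
  have hM : ((-1 : SL2Z) : Matrix (Fin 2) (Fin 2) ℤ) = !![-1, 0; 0, -1] := by
    ext i j; fin_cases i <;> fin_cases j <;> simp [Matrix.SpecialLinearGroup.coe_neg]
  apply Subtype.ext
  rw [XIrr.smul_val,
    show ((-1 : SL2Z) 0 0) = -1 from by rw [hM]; simp,
    show ((-1 : SL2Z) 0 1) = 0 from by rw [hM]; simp,
    show ((-1 : SL2Z) 1 0) = 0 from by rw [hM]; simp,
    show ((-1 : SL2Z) 1 1) = -1 from by rw [hM]; simp]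
  push_cast
  rw [zero_mul, zero_add, mul_comm]
  rw [div_eq_iff (by norm_num : (-1 : ℝ) ≠ 0)]
  ring

lemma center_le_ker_permSL : Subgroup.center SL2Z ≤ permSL.ker := by
  intro Z hZ
  rcases mem_center_iff'.mp hZ with rfl | rfl
  · exact permSL.map_one
  · rw [MonoidHom.mem_ker]
    apply Equiv.ext
    intro x
    exact neg_one_smul_XIrr x

noncomputable def permPSL : PSL2Z →* Equiv.Perm XIrr :=
  QuotientGroup.lift _ permSL center_le_ker_permSL

noncomputable instance : SMul PSL2Z XIrr := ⟨fun p x => permPSL p x⟩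

lemma psl_smul_def (p : PSL2Z) (x : XIrr) : p • x = permPSL p x := rfl

noncomputable instance : MulAction PSL2Z XIrr where
  one_smul x := by rw [psl_smul_def, _root_.map_one]; rfl
  mul_smul p q x := by rw [psl_smul_def, psl_smul_def, psl_smul_def, _root_.map_mul]; rfl

lemma proj_smul (A : SL2Z) (x : XIrr) : (proj A) • x = A • x := rfl

end SplitHelper

namespace SplitHelper

/-! ### Generators of `PSL(2,ℤ)` -/

noncomputable def sP : PSL2Z := proj ModularGroup.S
noncomputable def uP : PSL2Z := proj (ModularGroup.S * ModularGroup.T)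

lemma sP_sq : sP^2 = 1 := by
  rw [sP, ← _root_.map_pow, S_sq, proj_neg_one]

lemma uP_cube : uP^3 = 1 := by
  rw [uP, ← _root_.map_pow, ST_cube, proj_neg_one]

lemma S_ne_one : (ModularGroup.S : SL2Z) ≠ 1 ∧ (ModularGroup.S : SL2Z) ≠ -1 := by
  constructor <;> intro h <;>
  · have := congrArg (fun M : SL2Z => (M : Matrix (Fin 2) (Fin 2) ℤ) 1 0) h
    simp [ModularGroup.coe_S, Matrix.SpecialLinearGroup.coe_neg] at this

lemma sP_ne_one : sP ≠ 1 := by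
  rw [sP]
  intro h
  rcases proj_eq_one_iff.mp h with h1 | h1
  · exact S_ne_one.1 h1
  · exact S_ne_one.2 h1

lemma sP_inv : sP⁻¹ = sP := by
  have := sP_sq
  group
  rw [show (sP ^ (-1 : ℤ) = sP⁻¹) by group, inv_eq_iff_mul_eq_one, ← pow_two, sP_sq]

/-! ### Homs from cyclic groups -/

def homOfOrder {G : Type*} [Group G] (n : ℕ) [NeZero n] (g : G) (hg : g ^ n = 1) :
    Multiplicative (ZMod n) →* G where
  toFun a := g ^ (Multiplicative.toAdd a).val
  map_one' := by
    show g ^ (ZMod.val (0 : ZMod n)) = 1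
    rw [ZMod.val_zero, pow_zero]
  map_mul' a b := by
    show g ^ (Multiplicative.toAdd a + Multiplicative.toAdd b).val
      = g ^ (Multiplicative.toAdd a).val * g ^ (Multiplicative.toAdd b).val
    have hmod : ∀ m : ℕ, g ^ (m % n) = g ^ m := fun m => by
      conv_rhs => rw [← Nat.mod_add_div m n]
      rw [pow_add, pow_mul, hg, one_pow, mul_one]
    rw [ZMod.val_add, hmod, pow_add]

lemma homOfOrder_apply {G : Type*} [Group G] (n : ℕ) [NeZero n] (g : G) (hg : g ^ n = 1)
    (a : Multiplicative (ZMod n)) :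
    homOfOrder n g hg a = g ^ (Multiplicative.toAdd a).val := rfl

/-! ### The free product and its map to `PSL(2,ℤ)` -/

abbrev Hfam : Fin 2 → Type := ![Multiplicative (ZMod 2), Multiplicative (ZMod 3)]

noncomputable instance : ∀ i, Group (Hfam i) :=
  fun i => match i with
  | 0 => inferInstanceAs (Group (Multiplicative (ZMod 2)))
  | 1 => inferInstanceAs (Group (Multiplicative (ZMod 3)))

noncomputable def fgen : ∀ i, Hfam i →* PSL2Z := fun i => match i with
  | 0 => homOfOrder 2 sP sP_sq
  | 1 => homOfOrder 3 uP uP_cube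

noncomputable def phi : Monoid.CoprodI Hfam →* PSL2Z := Monoid.CoprodI.lift fgen

lemma phi_of_zero : phi (Monoid.CoprodI.of (show Hfam 0 from Multiplicative.ofAdd (1 : ZMod 2))) = sP := by
  rw [phi, Monoid.CoprodI.lift_of]
  show homOfOrder 2 sP sP_sq (Multiplicative.ofAdd (1 : ZMod 2)) = sP
  rw [homOfOrder_apply]
  norm_num [ZMod.val_one]

lemma phi_of_one : phi (Monoid.CoprodI.of (show Hfam 1 from Multiplicative.ofAdd (1 : ZMod 3))) = uP := by
  rw [phi, Monoid.CoprodI.lift_of]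
  show homOfOrder 3 uP uP_cube (Multiplicative.ofAdd (1 : ZMod 3)) = uP
  rw [homOfOrder_apply]
  norm_num [ZMod.val_one]

lemma phi_surjective : Function.Surjective phi := by
  rw [← MonoidHom.range_eq_top]
  rw [eq_top_iff]
  have hgen : Subgroup.closure ({sP, uP} : Set PSL2Z) = ⊤ := by
    have h1 : Subgroup.map proj (Subgroup.closure ({ModularGroup.S, ModularGroup.T} : Set SL2Z))
        = ⊤ := by
      rw [closure_S_T]
      exact Subgroup.map_top_of_surjective _ proj_surjective
    rw [MonoidHom.map_closure] at h1
    have himg : proj '' {ModularGroup.S, ModularGroup.T} = {sP, proj ModularGroup.T} := by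
      simp [Set.image_insert_eq, sP]
    rw [himg] at h1
    rw [eq_top_iff, ← h1]
    apply Subgroup.closure_le _ |>.mpr
    rintro x (rfl | rfl)
    · exact Subgroup.subset_closure (by simp)
    · have : proj ModularGroup.T = sP⁻¹ * uP := by
        rw [sP_inv, sP, uP, ← _root_.map_mul]
        have hm : ModularGroup.S * (ModularGroup.S * ModularGroup.T)
            = (-1 : SL2Z) * ModularGroup.T := by
          rw [← mul_assoc, ← pow_two, S_sq]
        rw [hm, _root_.map_mul, proj_neg_one, one_mul]
      rw [this]
      exact Subgroup.mul_mem _ (Subgroup.inv_mem _ (Subgroup.subset_closure (by simp)))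
        (Subgroup.subset_closure (by simp))
  rw [← hgen]
  apply Subgroup.closure_le _ |>.mpr
  rintro x (rfl | rfl)
  · exact ⟨_, phi_of_zero⟩
  · exact ⟨_, phi_of_one⟩

end SplitHelper

namespace SplitHelper

open Pointwise Cardinal

/-! ### Ping-pong: injectivity of `phi` -/

lemma coe_ST : ((ModularGroup.S * ModularGroup.T : SL2Z) : Matrix (Fin 2) (Fin 2) ℤ)
    = !![0,-1;1,1] := by
  rw [Matrix.SpecialLinearGroup.coe_mul, ModularGroup.coe_S, ModularGroup.coe_T]
  ext i j; fin_cases i <;> fin_cases j <;>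
    simp [Matrix.mul_apply, Fin.sum_univ_two]

lemma coe_ST2 : (((ModularGroup.S * ModularGroup.T)^2 : SL2Z) : Matrix (Fin 2) (Fin 2) ℤ)
    = !![-1,-1;1,0] := by
  rw [pow_two, Matrix.SpecialLinearGroup.coe_mul, coe_ST]
  ext i j; fin_cases i <;> fin_cases j <;>
    simp [Matrix.mul_apply, Fin.sum_univ_two]

lemma smul_val' (A : SL2Z) (M : Matrix (Fin 2) (Fin 2) ℤ)
    (hM : (A : Matrix (Fin 2) (Fin 2) ℤ) = M) (x : XIrr) :
    (A • x).val = ((M 0 0 : ℝ) * x.val + (M 0 1 : ℝ)) / ((M 1 0 : ℝ) * x.val + (M 1 1 : ℝ)) := by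
  rw [XIrr.smul_val, hM]

lemma incl_s {x : XIrr} (hx : x.val < 0) : 0 < (sP • x).val := by
  rw [sP, proj_smul, smul_val' _ _ ModularGroup.coe_S]
  rw [div_pos_iff]
  right
  constructor <;> simp <;> linarith

lemma incl_u1 {x : XIrr} (hx : 0 < x.val) : (uP • x).val < 0 := by
  rw [uP, proj_smul, smul_val' _ _ coe_ST]
  rw [div_neg_iff]
  right
  constructor <;> simp <;> linarith

lemma incl_u2 {x : XIrr} (hx : 0 < x.val) : ((uP^2) • x).val < 0 := by
  rw [uP, ← _root_.map_pow, proj_smul, smul_val' _ _ coe_ST2]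
  rw [div_neg_iff]
  right
  constructor <;> simp <;> linarith

noncomputable def Xsets : Fin 2 → Set XIrr := fun i => match i with
  | 0 => {x | 0 < x.val}
  | 1 => {x | x.val < 0}

lemma zmod2_cases : ∀ a : ZMod 2, a = 0 ∨ a = 1 := by decide
lemma zmod3_cases : ∀ a : ZMod 3, a = 0 ∨ a = 1 ∨ a = 2 := by decide

theorem phi_injective : Function.Injective phi := by
  apply Monoid.CoprodI.lift_injective_of_ping_pong fgen ?hcard Xsets ?hne ?hdisj ?hpp
  case hcard =>
    right
    refine ⟨1, ?_⟩
    show (3 : Cardinal) ≤ #(Multiplicative (ZMod 3))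
    rw [Cardinal.mk_fintype]
    norm_num
  case hne =>
    intro i
    match i with
    | 0 => exact ⟨⟨Real.sqrt 2, irrational_sqrt_two⟩, by
        show 0 < Real.sqrt 2
        positivity⟩
    | 1 => exact ⟨⟨-Real.sqrt 2, irrational_sqrt_two.neg⟩, by
        show -Real.sqrt 2 < 0
        have : 0 < Real.sqrt 2 := by positivity
        linarith⟩
  case hdisj =>
    intro i j hij
    match i, j with
    | 0, 0 => exact absurd rfl hij
    | 1, 1 => exact absurd rfl hij
    | 0, 1 =>
      apply Set.disjoint_left.mpr
      intro x h0 h1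
      exact absurd (show x.val < 0 from h1) (not_lt.mpr (le_of_lt (show 0 < x.val from h0)))
    | 1, 0 =>
      apply Set.disjoint_left.mpr
      intro x h0 h1
      exact absurd (show (0:ℝ) < x.val from h1) (not_lt.mpr (le_of_lt (show x.val < 0 from h0)))
  case hpp =>
    intro i j hij
    match i, j with
    | 0, 0 => exact absurd rfl hij
    | 1, 1 => exact absurd rfl hij
    | 0, 1 =>
      intro h hne1
      have hval : fgen 0 h = sP := by
        rcases zmod2_cases (Multiplicative.toAdd h) with h0 | h0
        · exact absurd (show h = 1 from h0) hne1
        · show homOfOrder 2 sP sP_sq h = sP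
          erw [homOfOrder_apply, h0]
          norm_num [ZMod.val_one]
      rw [hval]
      rintro y ⟨x, hx, rfl⟩
      exact incl_s hx
    | 1, 0 =>
      intro h hne1
      rcases zmod3_cases (Multiplicative.toAdd h) with h0 | h0 | h0
      · exact absurd (show h = 1 from h0) hne1
      · have hval : fgen 1 h = uP := by
          show homOfOrder 3 uP uP_cube h = uP
          erw [homOfOrder_apply, h0]
          norm_num [ZMod.val_one]
        rw [hval]
        rintro y ⟨x, hx, rfl⟩
        exact incl_u1 hx
      · have hval : fgen 1 h = uP^2 := by
          show homOfOrder 3 uP uP_cube h = uP^2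
          erw [homOfOrder_apply, h0]
          rw [show ((2 : ZMod 3)).val = 2 from rfl]
        rw [hval]
        rintro y ⟨x, hx, rfl⟩
        exact incl_u2 hx

/-- The isomorphism between the free product and `PSL(2,ℤ)`. -/
noncomputable def eIso : Monoid.CoprodI Hfam ≃* PSL2Z :=
  MulEquiv.ofBijective phi ⟨phi_injective, phi_surjective⟩

lemma eIso_apply (g : Monoid.CoprodI Hfam) : eIso g = phi g := rfl

end SplitHelper

namespace SplitHelper

/-! ### The `δ`-function attached to a subgroup without 2-torsion -/

section Delta

variable (Γ : Subgroup PSL2Z)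

lemma sP_smul_smul (y : PSL2Z ⧸ Γ) : sP • sP • y = y := by
  rw [← mul_smul, ← pow_two, sP_sq, one_smul]

/-- Pairing of cosets by the `s`-flip. -/
def flipSetoid : Setoid (PSL2Z ⧸ Γ) where
  r y y' := y' = y ∨ y' = sP • y
  iseqv := by
    constructor
    · exact fun y => Or.inl rfl
    · rintro y y' (rfl | rfl)
      · exact Or.inl rfl
      · exact Or.inr (sP_smul_smul Γ y).symm
    · rintro a b c (rfl | rfl) h
      · exact h
      · rcases h with rfl | rfl
        · exact Or.inr rfl
        · exact Or.inl (sP_smul_smul Γ a)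

open scoped Classical in
noncomputable def delta0 : (PSL2Z ⧸ Γ) → ZMod 2 := fun y =>
  if (Quotient.mk (flipSetoid Γ) y).out = y then 0 else 1

variable {Γ}

lemma delta0_flip (hfree : ∀ y : PSL2Z ⧸ Γ, sP • y ≠ y) (y : PSL2Z ⧸ Γ) :
    delta0 Γ (sP • y) = delta0 Γ y + 1 := by
  classical
  have hne := hfree y
  have hmk : (Quotient.mk (flipSetoid Γ) (sP • y)) = Quotient.mk (flipSetoid Γ) y :=
    Quotient.sound (Or.inr (sP_smul_smul Γ y).symm)
  have hrel : y = (Quotient.mk (flipSetoid Γ) y).out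
      ∨ y = sP • (Quotient.mk (flipSetoid Γ) y).out :=
    Quotient.exact (Quotient.out_eq (Quotient.mk (flipSetoid Γ) y))
  rcases hrel with h | h
  · rw [delta0, delta0, hmk, if_pos h.symm,
      if_neg (fun hc => hne (by rw [← h] at hc; exact hc.symm))]
    decide
  · have hout : (Quotient.mk (flipSetoid Γ) y).out = sP • y := by
      conv_rhs => rw [h, sP_smul_smul]
    rw [delta0, delta0, hmk, if_pos hout,
      if_neg (fun hc => hne (by rw [hout] at hc; exact hc))]
    decide

variable (Γ)

noncomputable def deltaP : PSL2Z → ZMod 2 := fun g => delta0 Γ (QuotientGroup.mk g)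

variable {Γ}

lemma deltaP_s (hfree : ∀ y : PSL2Z ⧸ Γ, sP • y ≠ y) (g : PSL2Z) :
    deltaP Γ (sP * g) = deltaP Γ g + 1 := by
  rw [deltaP, deltaP, show (QuotientGroup.mk (sP * g) : PSL2Z ⧸ Γ)
    = sP • (QuotientGroup.mk g : PSL2Z ⧸ Γ) from (MulAction.Quotient.smul_mk Γ sP g).symm]
  exact delta0_flip hfree _

lemma deltaP_right (g : PSL2Z) {γ : PSL2Z} (hγ : γ ∈ Γ) :
    deltaP Γ (g * γ) = deltaP Γ g := by
  rw [deltaP, deltaP, QuotientGroup.mk_mul_of_mem g hγ]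

end Delta

/-! ### The twisted action of the free product on `SL(2,ℤ)` -/

def UU : SL2Z := -(ModularGroup.S * ModularGroup.T)

lemma UU_eq : UU = (-1 : SL2Z) * (ModularGroup.S * ModularGroup.T) :=
  neg_one_mul' _

lemma UU_cube : UU^3 = 1 := by
  rw [UU_eq]
  rw [Commute.mul_pow (by exact (neg_one_central _).symm)]
  rw [ST_cube]
  rw [show ((-1 : SL2Z)^3 = -1) from by
    rw [pow_succ, pow_two, neg_one_mul_neg_one, one_mul]]
  exact neg_one_mul_neg_one

lemma proj_UU : proj UU = uP := by
  rw [UU_eq, _root_.map_mul, proj_neg_one, one_mul, uP]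

section Rho

variable (Γ : Subgroup PSL2Z)

noncomputable def sigmaFun : SL2Z → SL2Z := fun x =>
  (if deltaP Γ (proj x) = 0 then 1 else -1) * (ModularGroup.S * x)

variable {Γ}

lemma proj_sigmaFun (x : SL2Z) : proj (sigmaFun Γ x) = sP * proj x := by
  rw [sigmaFun]
  split_ifs <;> rw [_root_.map_mul, _root_.map_mul] <;>
    simp [proj_neg_one, sP]

lemma SS_cancel (x : SL2Z) : ModularGroup.S * (ModularGroup.S * x) = (-1 : SL2Z) * x := by
  rw [← mul_assoc, ← pow_two, S_sq]

lemma sigmaFun_involutive (hfree : ∀ y : PSL2Z ⧸ Γ, sP • y ≠ y) :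
    Function.Involutive (sigmaFun Γ) := by
  intro x
  have hδ : deltaP Γ (proj (sigmaFun Γ x)) = deltaP Γ (proj x) + 1 := by
    rw [proj_sigmaFun]
    exact deltaP_s hfree _
  rcases eq_or_ne (deltaP Γ (proj x)) 0 with h0 | h0
  · have h1 : deltaP Γ (proj (sigmaFun Γ x)) ≠ 0 := by rw [hδ, h0]; decide
    conv_lhs => rw [sigmaFun, if_neg h1]
    conv_lhs => rw [sigmaFun, if_pos h0]
    rw [one_mul, SS_cancel, ← mul_assoc, neg_one_mul_neg_one, one_mul]
  · have h1 : deltaP Γ (proj (sigmaFun Γ x)) = 0 := by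
      rw [hδ]
      rcases zmod2_cases (deltaP Γ (proj x)) with h | h
      · exact absurd h h0
      · rw [h]; decide
    conv_lhs => rw [sigmaFun, if_pos h1]
    conv_lhs => rw [sigmaFun, if_neg h0]
    rw [one_mul]
    have hc : ModularGroup.S * ((-1 : SL2Z) * (ModularGroup.S * x))
        = (-1 : SL2Z) * (ModularGroup.S * (ModularGroup.S * x)) := by
      rw [← mul_assoc, neg_one_central, mul_assoc]
    rw [hc, SS_cancel, ← mul_assoc, neg_one_mul_neg_one, one_mul]

end Rho

end SplitHelper

namespace SplitHelper

section RhoAction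

variable {Γ : Subgroup PSL2Z}

noncomputable def sigmaPerm (hfree : ∀ y : PSL2Z ⧸ Γ, sP • y ≠ y) : Equiv.Perm SL2Z :=
  (sigmaFun_involutive hfree).toPerm

lemma sigmaPerm_apply (hfree : ∀ y : PSL2Z ⧸ Γ, sP • y ≠ y) (x : SL2Z) :
    sigmaPerm hfree x = sigmaFun Γ x := rfl

lemma sigmaPerm_sq (hfree : ∀ y : PSL2Z ⧸ Γ, sP • y ≠ y) : (sigmaPerm hfree)^2 = 1 := by
  refine Equiv.ext fun x => ?_
  rw [pow_two, Equiv.Perm.mul_apply, sigmaPerm_apply, sigmaPerm_apply, Equiv.Perm.one_apply]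
  exact sigmaFun_involutive hfree x

noncomputable def uuPerm : Equiv.Perm SL2Z := Equiv.mulLeft UU

lemma uuPerm_apply (x : SL2Z) : uuPerm x = UU * x := rfl

lemma uuPerm_cube : (uuPerm)^3 = 1 := by
  refine Equiv.ext fun x => ?_
  rw [pow_succ, pow_succ, pow_one, Equiv.Perm.mul_apply, Equiv.Perm.mul_apply,
    uuPerm_apply, uuPerm_apply, uuPerm_apply, Equiv.Perm.one_apply]
  rw [← mul_assoc, ← mul_assoc, show UU * UU * UU = UU^3 from by rw [pow_succ, pow_two],
    UU_cube, one_mul]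

lemma sigma_pow_cover (hfree : ∀ y : PSL2Z ⧸ Γ, sP • y ≠ y) (k : ℕ) (x : SL2Z) :
    proj (((sigmaPerm hfree)^k) x) = sP^k * proj x := by
  induction k generalizing x with
  | zero => simp
  | succ n ihn =>
    rw [pow_succ, pow_succ, Equiv.Perm.mul_apply, sigmaPerm_apply, ihn, proj_sigmaFun,
      mul_assoc]

lemma uu_pow_cover (k : ℕ) (x : SL2Z) :
    proj ((uuPerm^k) x) = uP^k * proj x := by
  induction k generalizing x with
  | zero => simp
  | succ n ihn =>
    rw [pow_succ, pow_succ, Equiv.Perm.mul_apply, uuPerm_apply, ihn, _root_.map_mul,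
      proj_UU, mul_assoc]

lemma sigma_pow_equivariant (hfree : ∀ y : PSL2Z ⧸ Γ, sP • y ≠ y) (k : ℕ)
    (x B : SL2Z) (hB : proj B ∈ Γ) :
    ((sigmaPerm hfree)^k) (x * B) = ((sigmaPerm hfree)^k) x * B := by
  induction k generalizing x with
  | zero => simp
  | succ n ihn =>
    have hσ : sigmaFun Γ (x * B) = sigmaFun Γ x * B := by
      rw [sigmaFun, sigmaFun, _root_.map_mul, deltaP_right _ hB, mul_assoc, mul_assoc]
    rw [pow_succ, Equiv.Perm.mul_apply, Equiv.Perm.mul_apply, sigmaPerm_apply,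
      sigmaPerm_apply, hσ, ihn]

lemma uu_pow_equivariant (k : ℕ) (x B : SL2Z) :
    ((uuPerm)^k) (x * B) = ((uuPerm)^k) x * B := by
  induction k generalizing x with
  | zero => simp
  | succ n ihn =>
    rw [pow_succ, Equiv.Perm.mul_apply, Equiv.Perm.mul_apply, uuPerm_apply, uuPerm_apply,
      ← mul_assoc, ihn]

noncomputable def rfam (hfree : ∀ y : PSL2Z ⧸ Γ, sP • y ≠ y) :
    ∀ i, Hfam i →* Equiv.Perm SL2Z := fun i => match i with
  | 0 => homOfOrder 2 (sigmaPerm hfree) (sigmaPerm_sq hfree)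
  | 1 => homOfOrder 3 uuPerm uuPerm_cube

noncomputable def rho (hfree : ∀ y : PSL2Z ⧸ Γ, sP • y ≠ y) :
    Monoid.CoprodI Hfam →* Equiv.Perm SL2Z := Monoid.CoprodI.lift (rfam hfree)

lemma rho_cover (hfree : ∀ y : PSL2Z ⧸ Γ, sP • y ≠ y) (g : Monoid.CoprodI Hfam) (x : SL2Z) :
    proj ((rho hfree g) x) = phi g * proj x := by
  induction g using Monoid.CoprodI.induction_on generalizing x with
  | one => simp
  | of i m =>
    rw [rho, Monoid.CoprodI.lift_of, phi, Monoid.CoprodI.lift_of]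
    match i with
    | 0 =>
      show proj ((homOfOrder 2 (sigmaPerm hfree) (sigmaPerm_sq hfree) m) x)
        = homOfOrder 2 sP sP_sq m * proj x
      erw [homOfOrder_apply, homOfOrder_apply]
      exact sigma_pow_cover hfree _ x
    | 1 =>
      show proj ((homOfOrder 3 uuPerm uuPerm_cube m) x)
        = homOfOrder 3 uP uP_cube m * proj x
      erw [homOfOrder_apply, homOfOrder_apply]
      exact uu_pow_cover _ x
  | mul g h ihg ihh =>
    rw [_root_.map_mul (rho hfree) g h, Equiv.Perm.mul_apply, _root_.map_mul phi g h,
      ihg, ihh, mul_assoc]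

lemma rho_equivariant (hfree : ∀ y : PSL2Z ⧸ Γ, sP • y ≠ y) (g : Monoid.CoprodI Hfam)
    (x B : SL2Z) (hB : proj B ∈ Γ) :
    (rho hfree g) (x * B) = (rho hfree g) x * B := by
  induction g using Monoid.CoprodI.induction_on generalizing x with
  | one => simp
  | of i m =>
    rw [rho, Monoid.CoprodI.lift_of]
    match i with
    | 0 =>
      show (homOfOrder 2 (sigmaPerm hfree) (sigmaPerm_sq hfree) m) (x * B)
        = (homOfOrder 2 (sigmaPerm hfree) (sigmaPerm_sq hfree) m) x * B
      erw [homOfOrder_apply]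
      exact sigma_pow_equivariant hfree _ x B hB
    | 1 =>
      show (homOfOrder 3 uuPerm uuPerm_cube m) (x * B)
        = (homOfOrder 3 uuPerm uuPerm_cube m) x * B
      erw [homOfOrder_apply]
      exact uu_pow_equivariant _ x B
  | mul g h ihg ihh =>
    rw [_root_.map_mul (rho hfree) g h, Equiv.Perm.mul_apply, Equiv.Perm.mul_apply, ihh, ihg]

end RhoAction

end SplitHelper

open SplitHelper in
/-- If `Γ ≤ PSL(2,ℤ)` has finite index and contains no element of order 2, then the
surjection `Γ' = π⁻¹(Γ) → Γ` splits. -/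
theorem stmt_0 (Γ : Subgroup PSL2Z) (hfi : Γ.FiniteIndex)
    (h2 : ∀ γ ∈ Γ, orderOf γ ≠ 2) :
    ∃ s : Γ →* (Γ.comap proj), ∀ γ : Γ, proj ((s γ : Γ.comap proj) : SL2Z) = (γ : PSL2Z) := by
  classical
  -- the `s`-flip on `PSL2Z ⧸ Γ` has no fixed point
  have hfree : ∀ y : PSL2Z ⧸ Γ, sP • y ≠ y := by
    intro y hy
    obtain ⟨x, rfl⟩ := QuotientGroup.mk_surjective y
    rw [MulAction.Quotient.smul_mk] at hy
    have hmem : (sP • x)⁻¹ * x ∈ Γ := QuotientGroup.eq.mp hy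
    have hconj : (sP • x)⁻¹ * x = x⁻¹ * sP * x := by
      show (sP * x)⁻¹ * x = x⁻¹ * sP * x
      rw [_root_.mul_inv_rev, sP_inv]
    rw [hconj] at hmem
    apply h2 _ hmem
    apply orderOf_eq_prime
    · rw [show (x⁻¹ * sP * x)^2 = x⁻¹ * sP^2 * x from by rw [pow_two, pow_two]; group, sP_sq]
      group
    · intro hone
      apply sP_ne_one
      have : x * (x⁻¹ * sP * x) * x⁻¹ = x * 1 * x⁻¹ := by rw [hone]
      rw [mul_one, mul_inv_cancel] at this
      rw [← this]
      group
  -- the splitting map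
  set Θ : PSL2Z → SL2Z := fun p => (rho hfree (eIso.symm p)) 1 with hΘ
  have hΘproj : ∀ p : PSL2Z, proj (Θ p) = p := by
    intro p
    rw [hΘ]
    show proj ((rho hfree (eIso.symm p)) 1) = p
    rw [rho_cover hfree, _root_.map_one, mul_one]
    exact eIso.apply_symm_apply p
  have hΘmul : ∀ p q : PSL2Z, q ∈ Γ → Θ (p * q) = Θ p * Θ q := by
    intro p q hq
    show (rho hfree (eIso.symm (p * q))) 1 = _
    rw [_root_.map_mul eIso.symm p q, _root_.map_mul (rho hfree), Equiv.Perm.mul_apply]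
    have h1 : (rho hfree (eIso.symm q)) 1 = Θ q := rfl
    rw [h1, show (Θ q) = 1 * Θ q from (one_mul _).symm,
      rho_equivariant hfree _ 1 (Θ q) (by rw [hΘproj q]; exact hq)]
    rw [one_mul]
  refine ⟨{ toFun := fun γ => ⟨Θ γ.val, ?_⟩, map_one' := ?_, map_mul' := ?_ }, ?_⟩
  · rw [Subgroup.mem_comap, hΘproj]
    exact γ.prop
  · apply Subtype.ext
    show Θ 1 = 1
    rw [hΘ]
    show (rho hfree (eIso.symm 1)) 1 = 1
    rw [_root_.map_one eIso.symm, _root_.map_one (rho hfree)]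
    rfl
  · intro γ δ
    apply Subtype.ext
    show Θ ((γ * δ : Γ) : PSL2Z) = Θ γ.val * Θ δ.val
    rw [show ((γ * δ : Γ) : PSL2Z) = γ.val * δ.val from rfl]
    exact hΘmul _ _ δ.prop
  · intro γ
    exact hΘproj γ.val
end

section
/- Let T₁, …, Tₙ be elements of SL(2,ℤ), each conjugate to T. If the product T₁ T₂ ⋯ Tₙ lies in the center {±I} of SL(2,ℤ), then n is divisible by 6. -/
/-- An element of `SL(2,ℤ)` is a (right) Dehn twist if it is conjugate to `T = [[1,1],[0,1]]`. -/
def IsDehnTwist (x : SL2Z) : Prop := IsConj ModularGroup.T x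

def f2 : Matrix.SpecialLinearGroup (Fin 2) (ZMod 2) → ZMod 2 := fun A =>
  A.1 0 0 * A.1 1 0 + A.1 0 1 * A.1 1 0 + A.1 0 1 * A.1 1 1

lemma f2_mul : ∀ x y, f2 (x*y) = f2 x + f2 y := by decide

def f3 : Matrix.SpecialLinearGroup (Fin 2) (ZMod 3) → ZMod 3 := fun A =>
  A.1 0 0 * A.1 1 0 + A.1 0 1 * A.1 1 1 + A.1 1 0 * A.1 1 1
    + 2 * A.1 0 1 * A.1 1 0 * A.1 1 0 * A.1 1 1

lemma f3_mul : ∀ x y, f3 (x*y) = f3 x + f3 y := by decide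

def g2 : SL2Z → ZMod 2 := fun A =>
  f2 (Matrix.SpecialLinearGroup.map (Int.castRingHom (ZMod 2)) A)

def g3 : SL2Z → ZMod 3 := fun A =>
  f3 (Matrix.SpecialLinearGroup.map (Int.castRingHom (ZMod 3)) A)

lemma g2_mul (x y : SL2Z) : g2 (x*y) = g2 x + g2 y := by
  simp only [g2, map_mul, f2_mul]

lemma g3_mul (x y : SL2Z) : g3 (x*y) = g3 x + g3 y := by
  simp only [g3, map_mul, f3_mul]

lemma g2_T : g2 ModularGroup.T = 1 := by decide
lemma g3_T : g3 ModularGroup.T = 1 := by decide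
lemma g2_one : g2 1 = 0 := by decide
lemma g3_one : g3 1 = 0 := by decide
lemma g2_neg_one : g2 (-1) = 0 := by decide
lemma g3_neg_one : g3 (-1) = 0 := by decide

lemma conj_val {m : ℕ} (g : SL2Z → ZMod m) (hmul : ∀ x y, g (x*y) = g x + g y)
    (hone : g 1 = 0) {x : SL2Z} (h : IsDehnTwist x) : g x = g ModularGroup.T := by
  obtain ⟨c, hc⟩ := isConj_iff.mp h
  have h1 : g c + g c⁻¹ = 0 := by rw [← hmul, mul_inv_cancel, hone]
  calc g x = g (c * ModularGroup.T * c⁻¹) := by rw [hc]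
    _ = g c + g ModularGroup.T + g c⁻¹ := by rw [hmul, hmul]
    _ = g ModularGroup.T + (g c + g c⁻¹) := by ring
    _ = g ModularGroup.T := by rw [h1, add_zero]

lemma prod_val {m : ℕ} (g : SL2Z → ZMod m) (hmul : ∀ x y, g (x*y) = g x + g y)
    (hone : g 1 = 0) (hT : g ModularGroup.T = 1) (L : List SL2Z)
    (hL : ∀ x ∈ L, IsDehnTwist x) : g L.prod = (L.length : ZMod m) := by
  induction L with
  | nil => simpa using hone
  | cons a t ih =>
    have ha := conj_val g hmul hone (hL a List.mem_cons_self)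
    rw [List.prod_cons, hmul, ha, hT, ih (fun x hx => hL x (List.mem_cons_of_mem a hx))]
    simp [List.length_cons]
    ring

lemma dvd_len {m : ℕ} [NeZero m] (g : SL2Z → ZMod m) (hmul : ∀ x y, g (x*y) = g x + g y)
    (hone : g 1 = 0) (hnegone : g (-1) = 0) (hT : g ModularGroup.T = 1) (L : List SL2Z)
    (hL : ∀ x ∈ L, IsDehnTwist x) (hprod : L.prod = 1 ∨ L.prod = -1) : m ∣ L.length := by
  have := prod_val g hmul hone hT L hL
  have hz : (L.length : ZMod m) = 0 := by
    rcases hprod with h | h <;> rw [h] at this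
    · rw [← this, hone]
    · rw [← this, hnegone]
  exact (ZMod.natCast_eq_zero_iff _ _).mp hz

/-- If a product of `n` elements, each conjugate to `T`, lies in the center `{±I}` of
`SL(2,ℤ)`, then `6 ∣ n`. -/
theorem stmt_6 (L : List SL2Z) (hL : ∀ x ∈ L, IsDehnTwist x)
    (hprod : L.prod = 1 ∨ L.prod = -1) : 6 ∣ L.length := by
  have h2 := dvd_len g2 g2_mul g2_one g2_neg_one g2_T L hL hprod
  have h3 := dvd_len g3 g3_mul g3_one g3_neg_one g3_T L hL hprod
  omega
end

section
/- Let g ∈ SL(2,ℤ). If g can be written both as a product of m elements each conjugate to T and as a product of n elements each conjugate to T, then m ≡ n (mod 12). -/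
set_option maxRecDepth 1000000
set_option maxHeartbeats 40000000

namespace Aux912

/-- The abelianization map `SL(2, ℤ/3) → ℤ/3` as a polynomial formula in the entries. -/
def f3 (A : Matrix.SpecialLinearGroup (Fin 2) (ZMod 3)) : ZMod 3 :=
  A.1 0 0 * A.1 1 0 + A.1 0 1 * A.1 1 1 + A.1 1 0 * A.1 1 1
    + 2 * A.1 0 1 * A.1 1 0 ^ 2 * A.1 1 1

def f3hom : Matrix.SpecialLinearGroup (Fin 2) (ZMod 3) →* Multiplicative (ZMod 3) where
  toFun A := Multiplicative.ofAdd (f3 A)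
  map_one' := by decide
  map_mul' := by decide

/-- The abelianization map `SL(2, ℤ/4) → ℤ/4`, tabulated on entries. -/
def g4 : ℕ → ℕ → ℕ → ℕ → ZMod 4
  | 0, 1, 3, 0 => 3
  | 0, 1, 3, 1 => 2
  | 0, 1, 3, 2 => 1
  | 0, 3, 1, 0 => 1
  | 0, 3, 1, 1 => 2
  | 0, 3, 1, 2 => 3
  | 1, 0, 1, 1 => 3
  | 1, 0, 2, 1 => 2
  | 1, 0, 3, 1 => 1
  | 1, 1, 0, 1 => 1
  | 1, 1, 2, 3 => 3
  | 1, 1, 3, 0 => 2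
  | 1, 2, 0, 1 => 2
  | 1, 2, 1, 3 => 1
  | 1, 2, 3, 3 => 3
  | 1, 3, 0, 1 => 3
  | 1, 3, 1, 0 => 2
  | 1, 3, 2, 3 => 1
  | 2, 1, 1, 3 => 2
  | 2, 1, 3, 0 => 1
  | 2, 1, 3, 2 => 3
  | 2, 3, 1, 0 => 3
  | 2, 3, 1, 2 => 1
  | 2, 3, 3, 3 => 2
  | 3, 0, 0, 3 => 2
  | 3, 0, 1, 3 => 3
  | 3, 0, 3, 3 => 1
  | 3, 1, 0, 3 => 1
  | 3, 1, 1, 2 => 2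
  | 3, 1, 2, 1 => 3
  | 3, 2, 1, 1 => 1
  | 3, 2, 2, 3 => 2
  | 3, 2, 3, 1 => 3
  | 3, 3, 0, 3 => 3
  | 3, 3, 2, 1 => 1
  | 3, 3, 3, 2 => 2
  | _, _, _, _ => 0
def f4 (A : Matrix.SpecialLinearGroup (Fin 2) (ZMod 4)) : ZMod 4 :=
  g4 (A.1 0 0).val (A.1 0 1).val (A.1 1 0).val (A.1 1 1).val

def f4hom : Matrix.SpecialLinearGroup (Fin 2) (ZMod 4) →* Multiplicative (ZMod 4) where
  toFun A := Multiplicative.ofAdd (f4 A)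
  map_one' := by decide
  map_mul' := by decide

def φ3 : SL2Z →* Multiplicative (ZMod 3) :=
  f3hom.comp (Matrix.SpecialLinearGroup.map (Int.castRingHom (ZMod 3)))

def φ4 : SL2Z →* Multiplicative (ZMod 4) :=
  f4hom.comp (Matrix.SpecialLinearGroup.map (Int.castRingHom (ZMod 4)))

lemma φ3_T : φ3 ModularGroup.T = Multiplicative.ofAdd 1 := by decide

lemma φ4_T : φ4 ModularGroup.T = Multiplicative.ofAdd 1 := by decide

lemma hom_dehn {M : Type*} [CommGroup M] (φ : SL2Z →* M) {x : SL2Z}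
    (h : IsDehnTwist x) : φ x = φ ModularGroup.T := by
  obtain ⟨c, hc⟩ := h
  have h2 : φ c * φ ModularGroup.T = φ x * φ c := by
    rw [← map_mul, ← map_mul, hc.eq]
  exact (mul_left_cancel (h2.trans (mul_comm _ _))).symm

lemma prod_pow {M : Type*} [CommGroup M] (φ : SL2Z →* M) (L : List SL2Z)
    (h : ∀ x ∈ L, IsDehnTwist x) : φ L.prod = φ ModularGroup.T ^ L.length := by
  induction L with
  | nil => simp
  | cons a l ih =>
    simp only [List.prod_cons, map_mul, List.length_cons, pow_succ]
    rw [ih (fun x hx => h x (List.mem_cons_of_mem _ hx)),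
      hom_dehn φ (h a List.mem_cons_self), mul_comm]

lemma modeq_of_hom {k : ℕ} [NeZero k] (φ : SL2Z →* Multiplicative (ZMod k))
    (hT : φ ModularGroup.T = Multiplicative.ofAdd 1)
    (g : SL2Z) (L₁ L₂ : List SL2Z)
    (h₁ : ∀ x ∈ L₁, IsDehnTwist x) (h₂ : ∀ x ∈ L₂, IsDehnTwist x)
    (hp₁ : L₁.prod = g) (hp₂ : L₂.prod = g) :
    L₁.length ≡ L₂.length [MOD k] := by
  have h := (prod_pow φ L₁ h₁).symm.trans (by rw [hp₁, ← hp₂, prod_pow φ L₂ h₂])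
  rw [hT] at h
  have h' : ((L₁.length : ZMod k)) = (L₂.length : ZMod k) := by
    have e : ∀ m : ℕ, (Multiplicative.ofAdd (1 : ZMod k)) ^ m
        = Multiplicative.ofAdd ((m : ZMod k)) := by
      intro m
      rw [← ofAdd_nsmul, nsmul_eq_mul, mul_one]
    rw [e, e] at h
    exact Multiplicative.ofAdd.injective h
  exact (ZMod.natCast_eq_natCast_iff _ _ _).mp h'

end Aux912

/-- If `g ∈ SL(2,ℤ)` is a product of `m` conjugates of `T` and also a product of `n`
conjugates of `T`, then `m ≡ n (mod 12)`. -/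
theorem stmt_9 (g : SL2Z) (L₁ L₂ : List SL2Z)
    (h₁ : ∀ x ∈ L₁, IsDehnTwist x) (h₂ : ∀ x ∈ L₂, IsDehnTwist x)
    (hp₁ : L₁.prod = g) (hp₂ : L₂.prod = g) :
    L₁.length ≡ L₂.length [MOD 12] := by
  have h3 := Aux912.modeq_of_hom Aux912.φ3 Aux912.φ3_T g L₁ L₂ h₁ h₂ hp₁ hp₂
  have h4 := Aux912.modeq_of_hom Aux912.φ4 Aux912.φ4_T g L₁ L₂ h₁ h₂ hp₁ hp₂
  exact (Nat.modEq_and_modEq_iff_modEq_mul (by norm_num)).mp ⟨h3, h4⟩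
end

section
/- The central element −I of SL(2,ℤ) can be written as a product of 6 elements each conjugate to T, and it cannot be written as a product of fewer than 6 elements each conjugate to T. -/
/-- Formula for the composite `SL(2,ℤ) → SL(2,ℤ/3) → ℤ/3` abelianization map. -/
def F3 (a b c d : ZMod 3) : ZMod 3 := c*d + b*d + 2*b*c^2*d + a*c

/-- Formula for the composite `SL(2,ℤ) → SL(2,ℤ/4) → ℤ/4` abelianization map. -/
def F4 (a b c d : ZMod 4) : ZMod 4 := 1 + 3*d + 2*c + b*d + b*c + a*c + b*c*d + b*c^2

lemma key3 : ∀ a b c d e f g h : ZMod 3, a*d - b*c = 1 → e*h - f*g = 1 →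
    F3 (a*e+b*g) (a*f+b*h) (c*e+d*g) (c*f+d*h) = F3 a b c d + F3 e f g h := by decide

set_option maxHeartbeats 4000000 in
lemma key4 : ∀ a b c d e f g h : ZMod 4, a*d - b*c = 1 → e*h - f*g = 1 →
    F4 (a*e+b*g) (a*f+b*h) (c*e+d*g) (c*f+d*h) = F4 a b c d + F4 e f g h := by decide

def phi3 (x : SL2Z) : ZMod 3 :=
  F3 ((x.1 0 0 : ℤ) : ZMod 3) ((x.1 0 1 : ℤ) : ZMod 3) ((x.1 1 0 : ℤ) : ZMod 3) ((x.1 1 1 : ℤ) : ZMod 3)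

def phi4 (x : SL2Z) : ZMod 4 :=
  F4 ((x.1 0 0 : ℤ) : ZMod 4) ((x.1 0 1 : ℤ) : ZMod 4) ((x.1 1 0 : ℤ) : ZMod 4) ((x.1 1 1 : ℤ) : ZMod 4)

lemma sl_det (m : ℕ) [NeZero m] (x : SL2Z) : ((x.1 0 0 : ℤ) : ZMod m) * ((x.1 1 1 : ℤ) : ZMod m)
    - ((x.1 0 1 : ℤ) : ZMod m) * ((x.1 1 0 : ℤ) : ZMod m) = 1 := by
  have h := x.2
  rw [Matrix.det_fin_two] at h
  have h2 : (((x.1 0 0 * x.1 1 1 - x.1 0 1 * x.1 1 0 : ℤ)) : ZMod m) = ((1:ℤ) : ZMod m) := by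
    rw [h]
  push_cast at h2
  exact h2

lemma sl_mul_entry (m : ℕ) (x y : SL2Z) (i j : Fin 2) : (((x*y).1 i j : ℤ) : ZMod m)
    = ((x.1 i 0 : ℤ) : ZMod m) * ((y.1 0 j : ℤ) : ZMod m)
      + ((x.1 i 1 : ℤ) : ZMod m) * ((y.1 1 j : ℤ) : ZMod m) := by
  simp [Matrix.SpecialLinearGroup.coe_mul, Matrix.mul_apply, Fin.sum_univ_succ]

lemma phi3_mul (x y : SL2Z) : phi3 (x * y) = phi3 x + phi3 y := by
  have h := key3 _ _ _ _ _ _ _ _ (sl_det 3 x) (sl_det 3 y)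
  unfold phi3
  rw [sl_mul_entry, sl_mul_entry, sl_mul_entry, sl_mul_entry]
  exact h

lemma phi4_mul (x y : SL2Z) : phi4 (x * y) = phi4 x + phi4 y := by
  have h := key4 _ _ _ _ _ _ _ _ (sl_det 4 x) (sl_det 4 y)
  unfold phi4
  rw [sl_mul_entry, sl_mul_entry, sl_mul_entry, sl_mul_entry]
  exact h

section hom
variable {M : Type*} [AddCommGroup M] (f : SL2Z → M) (hf : ∀ x y, f (x*y) = f x + f y)
include hf

lemma hom_one : f 1 = 0 := by
  have h := hf 1 1
  rw [mul_one] at h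
  exact add_eq_left.mp h.symm

lemma hom_conj (x : SL2Z) (hx : IsDehnTwist x) : f x = f ModularGroup.T := by
  obtain ⟨c, hc⟩ := isConj_iff.mp hx
  have h1 : f (c * ModularGroup.T * c⁻¹) = f c + f ModularGroup.T + f c⁻¹ := by
    rw [hf, hf]
  have h2 : f c + f c⁻¹ = 0 := by
    rw [← hf, mul_inv_cancel]; exact hom_one f hf
  rw [hc] at h1
  rw [h1]
  have : f c + f ModularGroup.T + f c⁻¹ = (f c + f c⁻¹) + f ModularGroup.T := by
    abel
  rw [this, h2, zero_add]

lemma hom_prod (L : List SL2Z) (hL : ∀ x ∈ L, IsDehnTwist x) :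
    f L.prod = L.length • f ModularGroup.T := by
  induction L with
  | nil => simpa using hom_one f hf
  | cons a t ih =>
    rw [List.prod_cons, hf, hom_conj f hf a (hL a List.mem_cons_self),
      ih (fun x hx => hL x (List.mem_cons_of_mem a hx))]
    rw [List.length_cons, succ_nsmul, add_comm]

end hom

def Tw2 : SL2Z := ⟨!![1,0;-1,1], by norm_num [Matrix.det_fin_two_of]⟩

lemma tw2_dehn : IsDehnTwist Tw2 := by
  refine isConj_iff.mpr ⟨ModularGroup.S, ?_⟩
  rw [mul_inv_eq_iff_eq_mul]
  exact Subtype.ext (by decide)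

lemma phi3_T : phi3 ModularGroup.T = 1 := by decide
lemma phi4_T : phi4 ModularGroup.T = 1 := by decide
lemma phi3_neg_one : phi3 (-1) = 0 := by decide
lemma phi4_neg_one : phi4 (-1) = 2 := by decide

/-- `-I` is a product of 6 conjugates of `T`, and not a product of fewer than 6. -/
theorem stmt_12 :
    (∃ L : List SL2Z, (∀ x ∈ L, IsDehnTwist x) ∧ L.length = 6 ∧ L.prod = -1) ∧
    (∀ L : List SL2Z, (∀ x ∈ L, IsDehnTwist x) → L.prod = -1 → 6 ≤ L.length) := by
  constructor
  · refine ⟨[ModularGroup.T, Tw2, ModularGroup.T, Tw2, ModularGroup.T, Tw2], ?_, rfl, ?_⟩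
    · intro x hx
      simp only [List.mem_cons, List.not_mem_nil, or_false] at hx
      rcases hx with h | h | h | h | h | h <;> subst h
      all_goals first
        | exact IsConj.refl _
        | exact tw2_dehn
    · exact Subtype.ext (by decide)
  · intro L hL hprod
    have h3 : phi3 L.prod = L.length • phi3 ModularGroup.T := hom_prod phi3 phi3_mul L hL
    have h4 : phi4 L.prod = L.length • phi4 ModularGroup.T := hom_prod phi4 phi4_mul L hL
    rw [hprod, phi3_neg_one, phi3_T] at h3
    rw [hprod, phi4_neg_one, phi4_T] at h4
    rw [nsmul_eq_mul, mul_one] at h3 h4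
    have e4 : (L.length : ZMod 4) = ((2 : ℕ) : ZMod 4) := by
      rw [← h4]; norm_num
    have m4 : L.length % 4 = 2 % 4 := (ZMod.natCast_eq_natCast_iff' _ _ _).mp e4
    have d3 : 3 ∣ L.length := (ZMod.natCast_eq_zero_iff _ _).mp h3.symm
    omega
end

section
/- The matrix [[0,1],[-1,0]] ∈ SL(2,ℤ) (an element of order 4) can be written as a product of 3 elements each conjugate to T, and it cannot be written as a product of fewer than 3 elements each conjugate to T. -/
/- Auxiliary material -/

abbrev SL2F2 := Matrix.SpecialLinearGroup (Fin 2) (ZMod 2)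

/-- Reduction mod 2. -/
def rho : SL2Z →* SL2F2 := Matrix.SpecialLinearGroup.map (Int.castRingHom (ZMod 2))

/-- The sign character of `SL(2,𝔽₂) ≅ S₃` with values in `ZMod 2`. -/
def chi (g : SL2F2) : ZMod 2 :=
  g.1 0 1 + g.1 1 0 + g.1 0 1 * g.1 1 0 * (1 + g.1 0 0 + g.1 1 1)

lemma chi_mul : ∀ a b : SL2F2, chi (a*b) = chi a + chi b := by decide

lemma chi_one : chi 1 = 0 := by decide

lemma chi_rho_T : chi (rho ModularGroup.T) = 1 := by
  have : rho ModularGroup.T = ⟨!![1,1;0,1], by decide⟩ := by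
    apply Subtype.ext
    ext i j
    fin_cases i <;> fin_cases j <;>
      simp [rho, ModularGroup.T, Matrix.SpecialLinearGroup.map] <;> decide
  rw [this]; decide

lemma chi_dehn (x : SL2Z) (hx : IsDehnTwist x) : chi (rho x) = 1 := by
  rw [IsDehnTwist, isConj_iff] at hx
  obtain ⟨c, hc⟩ := hx
  have h2 : chi (rho c) + chi (rho c⁻¹) = 0 := by
    rw [← chi_mul, ← map_mul, mul_inv_cancel, map_one, chi_one]
  rw [← hc, map_mul, map_mul, chi_mul, chi_mul, chi_rho_T]
  linear_combination h2

lemma chi_prod (L : List SL2Z) (h : ∀ x ∈ L, IsDehnTwist x) :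
    chi (rho L.prod) = (L.length : ZMod 2) := by
  induction L with
  | nil => simpa using chi_one
  | cons a l ih =>
    simp only [List.prod_cons, map_mul, chi_mul, List.length_cons]
    rw [chi_dehn a (h a (by simp)), ih (fun x hx => h x (by simp [hx]))]
    push_cast
    ring

lemma trace_dehn (x : SL2Z) (hx : IsDehnTwist x) : Matrix.trace x.1 = 2 := by
  rw [IsDehnTwist, isConj_iff] at hx
  obtain ⟨c, hc⟩ := hx
  have : x.1 = c.1 * ModularGroup.T.1 * (c⁻¹).1 := by rw [← hc]; simp
  rw [this, Matrix.trace_mul_cycle]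
  have : (c⁻¹).1 * c.1 = (1 : SL2Z).1 := by rw [← Matrix.SpecialLinearGroup.coe_mul]; simp
  rw [this]
  simp [ModularGroup.T, Matrix.trace_fin_two]

def Tm : SL2Z := ModularGroup.T
def U : SL2Z := ⟨!![1,0;-1,1], by norm_num [Matrix.det_fin_two_of]⟩
def Sm : SL2Z := ⟨!![0,-1;1,0], by norm_num [Matrix.det_fin_two_of]⟩

lemma U_dehn : IsDehnTwist U := by
  rw [IsDehnTwist, isConj_iff]
  refine ⟨Sm, ?_⟩
  rw [mul_inv_eq_iff_eq_mul]
  apply Subtype.ext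
  simp only [Matrix.SpecialLinearGroup.coe_mul]
  show Sm.1 * ModularGroup.T.1 = U.1 * Sm.1
  simp [Sm, U, ModularGroup.T]

lemma exist3 : Tm * U * Tm = (⟨!![0, 1; -1, 0], by norm_num [Matrix.det_fin_two_of]⟩ : SL2Z) := by
  apply Subtype.ext
  simp only [Matrix.SpecialLinearGroup.coe_mul]
  show Tm.1 * U.1 * Tm.1 = _
  simp only [Tm, U, ModularGroup.coe_T]
  ext i j
  fin_cases i <;> fin_cases j <;> simp [Matrix.mul_apply, Fin.sum_univ_two]

lemma chi_rho_M :
    chi (rho (⟨!![0, 1; -1, 0], by norm_num [Matrix.det_fin_two_of]⟩ : SL2Z)) = 1 := by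
  have : rho (⟨!![0, 1; -1, 0], by norm_num [Matrix.det_fin_two_of]⟩ : SL2Z)
      = ⟨!![0,1;1,0], by decide⟩ := by
    apply Subtype.ext
    ext i j
    fin_cases i <;> fin_cases j <;>
      simp [rho, Matrix.SpecialLinearGroup.map] <;> decide
  rw [this]; decide

/-- The matrix `[[0,1],[-1,0]]` of order 4 is a product of 3 conjugates of `T`, and not a
product of fewer than 3. -/
theorem stmt_13 :
    (∃ L : List SL2Z, (∀ x ∈ L, IsDehnTwist x) ∧ L.length = 3 ∧
      L.prod = (⟨!![0, 1; -1, 0], by norm_num [Matrix.det_fin_two_of]⟩ : SL2Z)) ∧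
    (∀ L : List SL2Z, (∀ x ∈ L, IsDehnTwist x) →
      L.prod = (⟨!![0, 1; -1, 0], by norm_num [Matrix.det_fin_two_of]⟩ : SL2Z) →
      3 ≤ L.length) := by
  constructor
  · refine ⟨[Tm, U, Tm], ?_, rfl, ?_⟩
    · intro x hx
      simp only [List.mem_cons, List.not_mem_nil, or_false] at hx
      rcases hx with rfl | rfl | rfl
      · exact IsConj.refl _
      · exact U_dehn
      · exact IsConj.refl _
    · simpa [mul_assoc] using exist3
  · intro L hL hprod
    have hodd : (L.length : ZMod 2) = 1 := by
      rw [← chi_prod L hL, hprod, chi_rho_M]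
    have hne1 : L.length ≠ 1 := by
      intro h1
      obtain ⟨x, rfl⟩ : ∃ x, L = [x] := List.length_eq_one_iff.mp h1
      have hx : IsDehnTwist x := hL x (by simp)
      have := trace_dehn x hx
      rw [List.prod_singleton] at hprod
      rw [hprod] at this
      simp [Matrix.trace_fin_two] at this
    have : L.length % 2 = 1 := by
      rcases Nat.mod_two_eq_zero_or_one L.length with h | h
      · exfalso
        rw [← ZMod.natCast_mod L.length 2, h] at hodd
        simp at hodd
      · exact h
    omega
end

section
/- Let G and H be groups. Every element of finite order in the free product G ∗ H is conjugate (in G ∗ H) to an element of the canonical image of G or to an element of the canonical image of H. -/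
open Monoid Monoid.CoprodI

set_option linter.unusedSectionVars false

namespace Stmt17Aux

variable {ι : Type*} [DecidableEq ι] {M : ι → Type*} [∀ i, Group (M i)]
  [∀ i, DecidableEq (M i)]

/-- Product of a list of letters in the free product. -/
def pl (l : List (Σ i, M i)) : CoprodI M := (l.map fun p => CoprodI.of p.snd).prod

lemma word_prod_eq (w : CoprodI.Word M) : w.prod = pl w.toList := rfl

lemma pl_nil : pl ([] : List (Σ i, M i)) = 1 := rfl

lemma pl_append (l1 l2 : List (Σ i, M i)) : pl (l1 ++ l2) = pl l1 * pl l2 := by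
  simp [pl]

lemma pl_singleton (p : Σ i, M i) : pl [p] = CoprodI.of p.snd := by
  simp [pl]

lemma prod_injective : Function.Injective (CoprodI.Word.prod (M := M)) :=
  (CoprodI.Word.equiv (M := M)).symm.injective

lemma prod_equiv (x : CoprodI M) : (CoprodI.Word.equiv x).prod = x :=
  (CoprodI.Word.equiv (M := M)).symm_apply_apply x

/-- Words representing positive powers of a cyclically reduced element. -/
lemma pow_words (l : List (Σ i, M i)) (hl : l ≠ [])
    (hne : ∀ p ∈ l, p.snd ≠ 1) (hchain : l.Chain' fun p q => p.1 ≠ q.1)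
    (hij : (l.getLast hl).1 ≠ (l.head hl).1) :
    ∀ k : ℕ, ∃ w : CoprodI.Word M, w.toList.head? = l.head? ∧ w.toList ≠ [] ∧
      w.prod = (pl l) ^ (k + 1) := by
  intro k
  induction k with
  | zero => exact ⟨⟨l, hne, hchain⟩, rfl, hl, by simp [word_prod_eq]⟩
  | succ k ih =>
    obtain ⟨w, hhead, hwne, hwprod⟩ := ih
    refine ⟨⟨l ++ w.toList, ?_, ?_⟩, ?_, ?_, ?_⟩
    · intro p hp
      rcases List.mem_append.mp hp with h | h
      · exact hne p h
      · exact w.ne_one p h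
    · refine List.isChain_append.mpr ⟨hchain, w.chain_ne, ?_⟩
      intro p hp q hq
      rw [List.getLast?_eq_getLast hl, Option.mem_some_iff] at hp
      rw [hhead, List.head?_eq_head hl, Option.mem_some_iff] at hq
      subst hp; subst hq
      exact hij
    · show (l ++ w.toList).head? = l.head?
      rw [List.head?_append_of_ne_nil _ hl]
    · simp [hl]
    · show pl (l ++ w.toList) = _
      rw [pl_append, ← word_prod_eq, hwprod, pow_succ' (pl l) (k + 1), pow_succ']

lemma main [Nonempty ι] (x : CoprodI M) (hx : IsOfFinOrder x) :
    ∃ (i : ι) (m : M i), IsConj (CoprodI.of m) x := by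
  generalize hn : (CoprodI.Word.equiv x).toList.length = n
  induction n using Nat.strong_induction_on generalizing x with
  | _ n ih =>
  have hxw : pl (CoprodI.Word.equiv x).toList = x := by
    rw [← word_prod_eq, prod_equiv]
  have hchain0 : (CoprodI.Word.equiv x).toList.Chain' fun a b => a.1 ≠ b.1 :=
    (CoprodI.Word.equiv x).chain_ne
  have hne0 : ∀ a ∈ (CoprodI.Word.equiv x).toList, a.snd ≠ 1 :=
    (CoprodI.Word.equiv x).ne_one
  rcases hl : (CoprodI.Word.equiv x).toList with _ | ⟨p, l'⟩
  · refine ⟨Classical.arbitrary ι, 1, ?_⟩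
    rw [map_one]
    rw [hl, pl_nil] at hxw
    rw [← hxw]
  rw [hl] at hxw hn hchain0 hne0
  rcases hl' : l' with _ | ⟨q, rest⟩
  · subst hl'
    rw [show ([p] : List (Σ i, M i)) = [p] ++ [] from rfl, pl_append, pl_nil, mul_one,
      pl_singleton] at hxw
    exact ⟨p.1, p.2, hxw ▸ IsConj.refl _⟩
  subst hl'
  have hl'ne : (q :: rest : List (Σ i, M i)) ≠ [] := by simp
  have hlne : (p :: q :: rest : List (Σ i, M i)) ≠ [] := by simp
  set l' : List (Σ i, M i) := q :: rest with hl'def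
  rcases hB : l'.getLast hl'ne with ⟨bi, bm⟩
  have hb1 : ((p :: l').getLast hlne) = ⟨bi, bm⟩ := by
    rw [List.getLast_cons hl'ne, hB]
  by_cases hce : bi = p.1
  · -- not cyclically reduced: conjugate by the first letter and recurse
    have hmid : l'.dropLast ++ [(⟨bi, bm⟩ : Σ i, M i)] = l' := by
      rw [← hB]; exact List.dropLast_append_getLast hl'ne
    set mid := l'.dropLast with hmiddef
    subst hce
    set c : M p.1 := bm * p.2 with hcdef
    set x' := (CoprodI.of p.2)⁻¹ * x * CoprodI.of p.2 with hx'def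
    have hx'' : x' = pl mid * CoprodI.of c := by
      rw [hx'def, ← hxw]
      have : pl (p :: l') = CoprodI.of p.2 * (pl mid * CoprodI.of bm) := by
        conv_lhs => rw [← hmid]
        rw [show p :: (mid ++ [(⟨p.1, bm⟩ : Σ i, M i)]) = [p] ++ (mid ++ [⟨p.1, bm⟩]) from rfl,
          pl_append, pl_append, pl_singleton, pl_singleton]
      rw [this, hcdef, map_mul]
      group
    have hchain' : l'.Chain' fun a b => a.1 ≠ b.1 := hchain0.tail
    have hchain'' : (mid ++ [(⟨p.1, bm⟩ : Σ i, M i)]).Chain' fun a b => a.1 ≠ b.1 := by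
      rw [hmid]; exact hchain'
    obtain ⟨hchain_mid, -, hseam⟩ := List.isChain_append.mp hchain''
    have hmid_ne1 : ∀ a ∈ mid, a.snd ≠ 1 := by
      intro a ha
      exact hne0 a (List.mem_cons_of_mem _ (hmid ▸ List.mem_append_left _ ha))
    have key : ∃ w' : CoprodI.Word M, w'.prod = x' ∧ w'.toList.length ≤ mid.length + 1 := by
      by_cases hc1 : c = 1
      · refine ⟨⟨mid, hmid_ne1, hchain_mid⟩, ?_, by simp⟩
        rw [word_prod_eq, hx'', hc1, map_one, mul_one]
      · refine ⟨⟨mid ++ [⟨p.1, c⟩], ?_, ?_⟩, ?_, by simp⟩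
        · intro a ha
          rcases List.mem_append.mp ha with h | h
          · exact hmid_ne1 a h
          · rw [List.mem_singleton] at h; subst h; exact hc1
        · refine List.isChain_append.mpr ⟨hchain_mid, List.isChain_singleton _, ?_⟩
          intro a ha bb hbb
          have hbb' : (⟨p.1, c⟩ : Σ i, M i) = bb := by simpa using hbb
          subst hbb'
          simpa using hseam a ha ⟨p.1, bm⟩ (by simp)
        · rw [word_prod_eq, pl_append, pl_singleton, ← hx'']
    obtain ⟨w', hw'prod, hw'len⟩ := key
    have hx'fin : IsOfFinOrder x' := by
      have := (MulAut.conj ((CoprodI.of p.2)⁻¹)).toMonoidHom.isOfFinOrder hx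
      simpa [hx'def, MulAut.conj_apply, mul_assoc] using this
    have heq : CoprodI.Word.equiv x' = w' := by
      rw [← hw'prod]
      exact (CoprodI.Word.equiv (M := M)).apply_symm_apply w'
    have hlen : (CoprodI.Word.equiv x').toList.length < n := by
      rw [heq]
      have h1 : mid.length + 1 = l'.length := by rw [← hmid]; simp
      have h2 : n = l'.length + 1 := by rw [← hn]; simp
      omega
    obtain ⟨i, m, hconj⟩ := ih _ hlen x' hx'fin rfl
    refine ⟨i, m, hconj.trans (isConj_iff.mpr ⟨CoprodI.of p.2, ?_⟩)⟩
    rw [hx'def]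
    group
  · -- cyclically reduced of length ≥ 2 : infinite order, contradiction
    exfalso
    obtain ⟨k, hk0, hk⟩ := isOfFinOrder_iff_pow_eq_one.mp hx
    obtain ⟨k, rfl⟩ : ∃ k', k = k' + 1 := ⟨k - 1, by omega⟩
    obtain ⟨wk, -, hwkne, hwkprod⟩ :=
      pow_words (p :: l') hlne hne0 hchain0 (by rw [hb1]; exact hce) k
    rw [hxw, hk] at hwkprod
    have : wk = CoprodI.Word.empty := prod_injective (by rw [hwkprod]; rfl)
    rw [this] at hwkne
    exact hwkne rfl

end Stmt17Aux

universe u v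

theorem coprod_aux {G : Type u} {H : Type v} [Group G] [Group H] (x : Monoid.Coprod G H)
    (hx : IsOfFinOrder x) :
    (∃ g : G, IsConj (Monoid.Coprod.inl g) x) ∨
    (∃ h : H, IsConj (Monoid.Coprod.inr h) x) := by
  classical
  let M : Bool → Type (max u v) := fun b => cond b (ULift.{v} G) (ULift.{u} H)
  letI : ∀ b, Group (M b) := fun b => Bool.rec (motive := fun b => Group (M b))
    (inferInstance : Group (ULift.{u} H)) (inferInstance : Group (ULift.{v} G)) b
  let eG : ULift.{v} G ≃* G := MulEquiv.ulift
  let eH : ULift.{u} H ≃* H := MulEquiv.ulift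
  let φ : Monoid.Coprod G H →* CoprodI M :=
    Monoid.Coprod.lift ((CoprodI.of (i := true)).comp eG.symm.toMonoidHom)
      ((CoprodI.of (i := false)).comp eH.symm.toMonoidHom)
  let ψ : CoprodI M →* Monoid.Coprod G H :=
    CoprodI.lift (fun b => Bool.rec (motive := fun b => M b →* Monoid.Coprod G H)
      (Monoid.Coprod.inr.comp eH.toMonoidHom) (Monoid.Coprod.inl.comp eG.toMonoidHom) b)
  have hψφ : ∀ y, ψ (φ y) = y := by
    intro y
    have : ψ.comp φ = MonoidHom.id _ := by
      apply Monoid.Coprod.hom_ext <;> ext z <;>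
        simp [φ, ψ, eG, eH, Monoid.Coprod.lift_apply_inl, Monoid.Coprod.lift_apply_inr,
          CoprodI.lift_of, MulEquiv.apply_symm_apply] <;> rfl
    exact DFunLike.congr_fun this y
  obtain ⟨i, m, hconj⟩ := Stmt17Aux.main (φ x) (φ.isOfFinOrder hx)
  have hconj' : IsConj (ψ (CoprodI.of m)) x := by
    have := ψ.map_isConj hconj
    rwa [hψφ] at this
  cases i with
  | true =>
    left
    exact ⟨eG m, by simpa [ψ, eG, CoprodI.lift_of] using hconj'⟩
  | false =>
    right
    exact ⟨eH m, by simpa [ψ, eH, CoprodI.lift_of] using hconj'⟩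

/-- Every element of finite order in a free product `G ∗ H` is conjugate to an element of
the canonical image of `G` or of the canonical image of `H`. -/
theorem stmt_17 {G H : Type*} [Group G] [Group H] (x : Monoid.Coprod G H)
    (hx : IsOfFinOrder x) :
    (∃ g : G, IsConj (Monoid.Coprod.inl g) x) ∨
    (∃ h : H, IsConj (Monoid.Coprod.inr h) x) :=
  coprod_aux x hx
end
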